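/- Let γ ∈ (1,2) and Γ ∈ ℝ with Γ ≠ 0. Suppose V : (0,t0] → (-1,1) is differentiable, nowhere zero, and satisfies t·V'(t) = Γ·V(t)·(1-V(t)^2)/(1-(γ-1)V(t)^2) for all t ∈ (0,t0]. Then the function t ↦ V(t)/(1-V(t)^2)^((2-γ)/2) · t^(-Γ) is constant on (0,t0]. -/

import Mathlib

theorem V_implicit_conservation (γ Γ t0 : ℝ) (hγ : 1 < γ) (hγ2 : γ < 2)
    (hΓ : Γ ≠ 0) (ht0 : 0 < t0)
    (V : ℝ → ℝ)
    (hdiff : ∀ t ∈ Set.Ioc (0:ℝ) t0, DifferentiableAt ℝ V t)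
    (hrange : ∀ t ∈ Set.Ioc (0:ℝ) t0, V t ∈ Set.Ioo (-1:ℝ) 1)
    (hne : ∀ t ∈ Set.Ioc (0:ℝ) t0, V t ≠ 0)
    (hode : ∀ t ∈ Set.Ioc (0:ℝ) t0,
      t * deriv V t = Γ * V t * (1 - (V t)^2) / (1 - (γ - 1) * (V t)^2)) :
    ∀ s ∈ Set.Ioc (0:ℝ) t0, ∀ t ∈ Set.Ioc (0:ℝ) t0,
      V s / (1 - (V s)^2) ^ ((2 - γ)/2) * s ^ (-Γ)
        = V t / (1 - (V t)^2) ^ ((2 - γ)/2) * t ^ (-Γ) := by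
  set F : ℝ → ℝ := fun t => V t / (1 - (V t)^2) ^ ((2 - γ)/2) * t ^ (-Γ) with hF
  have key : ∀ t ∈ Set.Ioc (0:ℝ) t0, HasDerivAt F 0 t := by
    intro t ht
    obtain ⟨ht0', htle⟩ := ht
    have htne : t ≠ 0 := ne_of_gt ht0'
    have hv := hrange t ⟨ht0', htle⟩
    have hvpos : (0:ℝ) < 1 - (V t)^2 := by
      nlinarith [hv.1, hv.2]
    have hvne : 1 - (V t)^2 ≠ 0 := ne_of_gt hvpos
    have hD : (0:ℝ) < 1 - (γ - 1) * (V t)^2 := by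
      nlinarith [hv.1, hv.2, sq_nonneg (V t)]
    have hDne : 1 - (γ - 1) * (V t)^2 ≠ 0 := ne_of_gt hD
    have h1 : HasDerivAt V (deriv V t) t := (hdiff t ⟨ht0', htle⟩).hasDerivAt
    set v := V t
    set v' := deriv V t
    have h2 : HasDerivAt (fun t => 1 - (V t)^2) (-(2 * v * v')) t := by
      have := ((h1.pow 2).const_sub 1)
      refine this.congr_deriv ?_
      push_cast
      ring
    have h3 : HasDerivAt (fun t => (1 - (V t)^2) ^ ((2-γ)/2))
        (-(2 * v * v') * ((2-γ)/2) * (1 - v^2) ^ ((2-γ)/2 - 1)) t :=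
      h2.rpow_const (Or.inl hvne)
    have hA : (0:ℝ) < (1 - v^2) ^ ((2-γ)/2) := Real.rpow_pos_of_pos hvpos _
    have h4 := h1.div h3 (ne_of_gt hA)
    have h5 : HasDerivAt (fun t : ℝ => t ^ (-Γ)) (1 * (-Γ) * t ^ (-Γ - 1)) t :=
      (hasDerivAt_id t).rpow_const (Or.inl htne)
    have h6 := h4.mul h5
    have hode' : t * v' = Γ * v * (1 - v^2) / (1 - (γ - 1) * v^2) := hode t ⟨ht0', htle⟩
    have hv' : v' = Γ * v * (1 - v^2) / (1 - (γ - 1) * v^2) / t := by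
      rw [eq_div_iff htne]
      linear_combination hode'
    have hexp : (1 - v^2) ^ ((2-γ)/2 - 1) = (1 - v^2) ^ ((2-γ)/2) / (1 - v^2) := by
      rw [Real.rpow_sub hvpos, Real.rpow_one]
    have hexp2 : t ^ (-Γ - 1) = t ^ (-Γ) / t := by
      rw [Real.rpow_sub ht0', Real.rpow_one]
    have hzero : (v' * (1 - v ^ 2) ^ ((2 - γ) / 2) -
          v * (-(2 * v * v') * ((2 - γ) / 2) * (1 - v ^ 2) ^ ((2 - γ) / 2 - 1))) /
            ((1 - v ^ 2) ^ ((2 - γ) / 2)) ^ 2 * t ^ (-Γ) +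
          v / (1 - v ^ 2) ^ ((2 - γ) / 2) * (1 * -Γ * t ^ (-Γ - 1)) = 0 := by
      rw [hexp, hexp2, hv']
      have hAne := ne_of_gt hA
      have hDne' : 1 + v ^ 2 - v ^ 2 * γ ≠ 0 := fun h => hDne (by linear_combination h)
      field_simp
      linear_combination (Γ * v * t ^ (-Γ)) * inv_mul_cancel₀ hDne'
    replace h6 := h6.congr_deriv hzero
    exact h6
  have hF_eq : ∀ a ∈ Set.Ioc (0:ℝ) t0, ∀ b ∈ Set.Ioc (0:ℝ) t0, a ≤ b → F b = F a := by
    intro a ha b hb hab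
    have hsub : Set.Icc a b ⊆ Set.Ioc (0:ℝ) t0 := fun x hx =>
      ⟨lt_of_lt_of_le ha.1 hx.1, le_trans hx.2 hb.2⟩
    have hcont : ContinuousOn F (Set.Icc a b) := fun x hx =>
      ((key x (hsub hx)).continuousAt).continuousWithinAt
    exact constant_of_has_deriv_right_zero hcont
      (fun x hx => (key x (hsub ⟨hx.1, le_of_lt hx.2⟩)).hasDerivWithinAt) b
      ⟨hab, le_refl b⟩
  intro s hs t ht
  rcases le_total s t with h | h
  · exact (hF_eq s hs t ht h).symm
  · exact hF_eq t ht s hs h
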